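/- Let (γ,ν): I → ℝ² × S¹ be a Legendre curve with γ(t)=(x(t),z(t)), ν(t)=(a(t),b(t)) and curvature (ℓ,β), satisfying the relation ℓ(t)a(t) = α(t)β(t)x(t) for a smooth function α (i.e., K = αJ for the surface of revolution around the z-axis). Let t₀ be a singular point of γ (so β(t₀) = 0) and suppose x(t₀) ≠ 0, α(t₀) ≠ 0, ord(a)(t₀) = m+1 and ord(β)(t₀) = n+1. Then m ≤ n, and ℓ(t₀) ≠ 0 (equivalently, (γ,ν) is a Legendre immersion at t₀, i.e., γ is a front at t₀) if and only if ord(a)(t₀) = ord(β)(t₀). -/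

import Mathlib

/-- `OrdAt f t₀ n` : `f` has a zero of order `n` at `t₀`, i.e.
`f(t₀) = f'(t₀) = ⋯ = f^{(n-1)}(t₀) = 0` and `f^{(n)}(t₀) ≠ 0`. -/
def OrdAt (f : ℝ → ℝ) (t₀ : ℝ) (n : ℕ) : Prop :=
  (∀ k < n, iteratedDeriv k f t₀ = 0) ∧ iteratedDeriv n f t₀ ≠ 0

open Finset

lemma diff_it (f : ℝ → ℝ) (hf : ContDiff ℝ (⊤:ℕ∞) f) (m : ℕ) : Differentiable ℝ (iteratedDeriv m f) :=
  hf.differentiable_iteratedDeriv m (by exact_mod_cast lt_top_iff_ne_top.2 (by simp))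

lemma leibniz_iteratedDeriv (f g : ℝ → ℝ) (hf : ContDiff ℝ (⊤:ℕ∞) f) (hg : ContDiff ℝ (⊤:ℕ∞) g)
    (k : ℕ) :
    iteratedDeriv k (fun t => f t * g t) = fun t =>
      ∑ j ∈ range (k+1), (k.choose j : ℝ) * (iteratedDeriv j f t * iteratedDeriv (k-j) g t) := by
  induction k with
  | zero => simp
  | succ k ih =>
    rw [iteratedDeriv_succ, ih]
    funext t
    have hD : ∀ (j : ℕ) (h : ℝ → ℝ), ContDiff ℝ (⊤:ℕ∞) h →
        HasDerivAt (iteratedDeriv j h) (iteratedDeriv (j+1) h t) t := by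
      intro j h hh
      rw [iteratedDeriv_succ]
      exact ((diff_it h hh j) t).hasDerivAt
    have hterm : ∀ j ∈ range (k+1), HasDerivAt
        (fun t => (k.choose j : ℝ) * (iteratedDeriv j f t * iteratedDeriv (k-j) g t))
        ((k.choose j : ℝ) * (iteratedDeriv (j+1) f t * iteratedDeriv (k-j) g t
          + iteratedDeriv j f t * iteratedDeriv (k-j+1) g t)) t := by
      intro j _
      exact (((hD j f hf).mul (hD (k-j) g hg)).const_mul _)
    rw [(HasDerivAt.fun_sum hterm).deriv]
    have h1 : ∀ j ∈ range (k+1), (k.choose j : ℝ) *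
          (iteratedDeriv (j+1) f t * iteratedDeriv (k-j) g t
            + iteratedDeriv j f t * iteratedDeriv (k-j+1) g t)
        = (k.choose j : ℝ) * (iteratedDeriv (j+1) f t * iteratedDeriv (k+1-(j+1)) g t)
          + (k.choose j : ℝ) * (iteratedDeriv j f t * iteratedDeriv (k+1-j) g t) := by
      intro j hj
      rw [mem_range] at hj
      have e1 : k + 1 - (j+1) = k - j := by omega
      have e2 : k - j + 1 = k + 1 - j := by omega
      rw [e1, e2]; ring
    rw [sum_congr rfl h1, sum_add_distrib]
    have hS1 : ∑ j ∈ range (k+1),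
          (k.choose j : ℝ) * (iteratedDeriv (j+1) f t * iteratedDeriv (k+1-(j+1)) g t)
        = ∑ i ∈ range (k+1+1), (if i = 0 then 0 else (k.choose (i-1) : ℝ)) *
            (iteratedDeriv i f t * iteratedDeriv (k+1-i) g t) := by
      rw [Finset.sum_range_succ' (fun i => (if i = 0 then 0 else (k.choose (i-1) : ℝ)) *
            (iteratedDeriv i f t * iteratedDeriv (k+1-i) g t))]
      simp
    have hS2 : ∑ j ∈ range (k+1),
          (k.choose j : ℝ) * (iteratedDeriv j f t * iteratedDeriv (k+1-j) g t)
        = ∑ i ∈ range (k+1+1), (if i = k+1 then 0 else (k.choose i : ℝ)) *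
            (iteratedDeriv i f t * iteratedDeriv (k+1-i) g t) := by
      rw [Finset.sum_range_succ (fun i => (if i = k+1 then 0 else (k.choose i : ℝ)) *
            (iteratedDeriv i f t * iteratedDeriv (k+1-i) g t))]
      rw [if_pos rfl]
      simp only [zero_mul, add_zero]
      exact sum_congr rfl fun j hj => by
        rw [mem_range] at hj; rw [if_neg (by omega)]
    rw [hS1, hS2, ← sum_add_distrib]
    refine sum_congr rfl fun i hi => ?_
    rw [mem_range] at hi
    rcases Nat.eq_zero_or_pos i with h0 | hpos
    · subst h0; simp
    · rw [if_neg (by omega)]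
      obtain ⟨i', rfl⟩ : ∃ i', i = i' + 1 := ⟨i - 1, by omega⟩
      by_cases hik : i' + 1 = k + 1
      · rw [if_pos hik]
        have hik' : i' = k := by omega
        subst hik'
        simp
      · rw [if_neg hik, Nat.add_sub_cancel, Nat.choose_succ_succ k i']
        push_cast; ring

/-- Let `(γ, ν)` be a Legendre curve with `γ = (x, z)`, `ν = (a, b)`,
curvature `(ℓ, β)`, satisfying `ℓa = αβx` for a smooth function `α` (i.e. `K = αJ` for
the surface of revolution around the z-axis).  If `t₀` is a singular point of `γ`
(`β t₀ = 0`), `x t₀ ≠ 0`, `α t₀ ≠ 0`, `ord(a)(t₀) = m + 1` and `ord(β)(t₀) = n + 1`,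
then `m ≤ n`, and `ℓ t₀ ≠ 0` (equivalently `(ℓ t₀, β t₀) ≠ (0, 0)`, i.e. `(γ, ν)` is a
Legendre immersion at `t₀`, i.e. `γ` is a front at `t₀`) iff
`ord(a)(t₀) = ord(β)(t₀)`. -/
theorem front_condition_for_Gauss_curvature_ratio_curve
    (x z a b ℓ β α : ℝ → ℝ) (t₀ : ℝ) (m n : ℕ)
    (hx : ContDiff ℝ (⊤ : ℕ∞) x) (hz : ContDiff ℝ (⊤ : ℕ∞) z)
    (ha : ContDiff ℝ (⊤ : ℕ∞) a) (hb : ContDiff ℝ (⊤ : ℕ∞) b)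
    (hl : ContDiff ℝ (⊤ : ℕ∞) ℓ) (hβc : ContDiff ℝ (⊤ : ℕ∞) β)
    (hα : ContDiff ℝ (⊤ : ℕ∞) α)
    (hunit : ∀ t, a t ^ 2 + b t ^ 2 = 1)
    (hdx : ∀ t, deriv x t = -(β t) * b t)
    (hdz : ∀ t, deriv z t = β t * a t)
    (hda : ∀ t, deriv a t = -(ℓ t) * b t)
    (hdb : ∀ t, deriv b t = ℓ t * a t)
    -- K = α J : ℓ a = α β x
    (hrel : ∀ t, ℓ t * a t = α t * β t * x t)
    (hsing : β t₀ = 0) (hx0 : x t₀ ≠ 0) (hα0 : α t₀ ≠ 0)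
    (horda : OrdAt a t₀ (m + 1)) (hordβ : OrdAt β t₀ (n + 1)) :
    m ≤ n ∧
    (ℓ t₀ ≠ 0 ↔ m = n) ∧
    ((ℓ t₀, β t₀) ≠ ((0 : ℝ), (0 : ℝ)) ↔ m = n) := by
  obtain ⟨horda1, horda2⟩ := horda
  obtain ⟨hordβ1, hordβ2⟩ := hordβ
  have ha0 : ∀ i ≤ m, iteratedDeriv i a t₀ = 0 := fun i hi => horda1 i (by omega)
  have hβ0 : ∀ i ≤ n, iteratedDeriv i β t₀ = 0 := fun i hi => hordβ1 i (by omega)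
  have hax : ContDiff ℝ (⊤:ℕ∞) (fun t => α t * x t) := hα.mul hx
  have hPQ : (fun t => ℓ t * a t) = (fun t => β t * (α t * x t)) :=
    funext fun t => by rw [hrel t]; ring
  -- derivatives of ℓ·a via the β·(αx) side
  have hQval : ∀ k ≤ n, iteratedDeriv k (fun t => ℓ t * a t) t₀ = 0 := by
    intro k hk
    rw [hPQ, congrFun (leibniz_iteratedDeriv β (fun t => α t * x t) hβc hax k) t₀]
    refine sum_eq_zero fun j hj => ?_
    rw [mem_range] at hj
    rw [hβ0 j (by omega)]
    ring
  have hQtop : iteratedDeriv (n+1) (fun t => ℓ t * a t) t₀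
      = iteratedDeriv (n+1) β t₀ * (α t₀ * x t₀) := by
    rw [hPQ, congrFun (leibniz_iteratedDeriv β (fun t => α t * x t) hβc hax (n+1)) t₀,
      Finset.sum_range_succ]
    rw [sum_eq_zero (fun j hj => by
      rw [mem_range] at hj
      rw [hβ0 j (by omega)]; ring)]
    simp [iteratedDeriv_zero]
  have hQtop_ne : iteratedDeriv (n+1) (fun t => ℓ t * a t) t₀ ≠ 0 := by
    rw [hQtop]
    exact mul_ne_zero hordβ2 (mul_ne_zero hα0 hx0)
  -- derivatives of ℓ·a via the ℓ·a side
  have hP : ∀ k, iteratedDeriv k (fun t => ℓ t * a t) t₀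
      = ∑ j ∈ range (k+1), (k.choose j : ℝ) * (iteratedDeriv j ℓ t₀ * iteratedDeriv (k-j) a t₀) :=
    fun k => congrFun (leibniz_iteratedDeriv ℓ a hl ha k) t₀
  have hmn : m ≤ n := by
    by_contra hc
    apply hQtop_ne
    rw [hP (n+1)]
    refine sum_eq_zero fun j hj => ?_
    rw [mem_range] at hj
    rw [ha0 (n+1-j) (by omega)]
    ring
  have key2 : iteratedDeriv (m+1) (fun t => ℓ t * a t) t₀ = ℓ t₀ * iteratedDeriv (m+1) a t₀ := by
    rw [hP (m+1), Finset.sum_range_succ' (fun j => ((m+1).choose j : ℝ) *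
      (iteratedDeriv j ℓ t₀ * iteratedDeriv (m+1-j) a t₀))]
    rw [sum_eq_zero (fun j hj => by
      rw [mem_range] at hj
      rw [ha0 (m+1-(j+1)) (by omega)]; ring)]
    simp [iteratedDeriv_zero]
  have hiff : ℓ t₀ ≠ 0 ↔ m = n := by
    constructor
    · intro hℓ
      rcases lt_or_eq_of_le hmn with hlt | heq
      · exfalso
        have := hQval (m+1) (by omega)
        rw [key2] at this
        exact mul_ne_zero hℓ horda2 this
      · exact heq
    · intro heq
      subst heq
      intro hℓ0
      apply hQtop_ne
      rw [key2, hℓ0, zero_mul]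
  refine ⟨hmn, hiff, ?_⟩
  rw [← hiff]
  simp [Prod.ext_iff, hsing]
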